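/- For positive integers N, l with l < N, the mask of the pseudo spline of type II satisfies â(ξ) ≥ 0 for all ξ, â is decreasing on [0, π], and â(0) = 1, â(π) = 0. -/

import Mathlib

open Real Finset

noncomputable def pseudoMaskII (N l : ℕ) (ξ : ℝ) : ℝ :=
  Real.cos (ξ / 2) ^ (2 * N) *
    ∑ j ∈ Finset.range (l + 1), ((N - 1 + j).choose j : ℝ) * Real.sin (ξ / 2) ^ (2 * j)

/-- The polynomial `g(y) = (1-y)^N * ∑ C(N-1+j, j) y^j`. -/
noncomputable def pmG (N l : ℕ) (y : ℝ) : ℝ :=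
  (1 - y) ^ N * ∑ j ∈ Finset.range (l + 1), ((N - 1 + j).choose j : ℝ) * y ^ j

lemma pm_c_succ {N : ℕ} (hN : 0 < N) (j : ℕ) :
    ((j : ℝ) + 1) * ((N - 1 + (j + 1)).choose (j + 1) : ℝ)
      = ((N : ℝ) + j) * ((N - 1 + j).choose j : ℝ) := by
  have h := Nat.add_one_mul_choose_eq (N - 1 + j) j
  try simp only [Nat.succ_eq_add_one] at h
  have h1 : N - 1 + j + 1 = N + j := by omega
  have h2 : N - 1 + (j + 1) = N + j := by omega
  rw [h1] at h
  rw [h2]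
  have hnat : (j + 1) * (N + j).choose (j + 1) = (N + j) * (N - 1 + j).choose j :=
    (mul_comm _ _).trans h.symm
  exact_mod_cast congrArg (Nat.cast : ℕ → ℝ) hnat

lemma pm_key {N : ℕ} (hN : 0 < N) (l : ℕ) (y : ℝ) :
    (1 - y) * (∑ j ∈ Finset.range (l + 1), ((N - 1 + j).choose j : ℝ) * (j * y ^ (j - 1)))
      - N * (∑ j ∈ Finset.range (l + 1), ((N - 1 + j).choose j : ℝ) * y ^ j)
      = -(((N : ℝ) + l) * ((N - 1 + l).choose l : ℝ)) * y ^ l := by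
  induction l with
  | zero => simp
  | succ l ih =>
    rw [Finset.sum_range_succ
        (fun j => ((N - 1 + j).choose j : ℝ) * (j * y ^ (j - 1))) (l + 1),
      Finset.sum_range_succ (fun j => ((N - 1 + j).choose j : ℝ) * y ^ j) (l + 1)]
    have hc := pm_c_succ hN l
    simp only [Nat.add_sub_cancel]
    push_cast
    push_cast at ih
    linear_combination ih + y ^ l * hc

lemma pmG_hasDerivAt {N : ℕ} (hN : 0 < N) (l : ℕ) (y : ℝ) :
    HasDerivAt (pmG N l)
      (-(((N : ℝ) + l) * ((N - 1 + l).choose l : ℝ)) * ((1 - y) ^ (N - 1) * y ^ l)) y := by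
  have hS : HasDerivAt
      (fun y : ℝ => ∑ j ∈ Finset.range (l + 1), ((N - 1 + j).choose j : ℝ) * y ^ j)
      (∑ j ∈ Finset.range (l + 1), ((N - 1 + j).choose j : ℝ) * (j * y ^ (j - 1))) y :=
    HasDerivAt.fun_sum fun j _ => (hasDerivAt_pow j y).const_mul _
  have hP : HasDerivAt (fun y : ℝ => (1 - y) ^ N) (-(N * (1 - y) ^ (N - 1))) y := by
    have := ((hasDerivAt_id y).const_sub 1).fun_pow N
    simp only [id_eq] at this
    refine this.congr_deriv ?_
    ring
  have hg := hP.fun_mul hS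
  refine hg.congr_deriv ?_
  symm
  have hpow : (1 - y) ^ N = (1 - y) ^ (N - 1) * (1 - y) := by
    rw [← pow_succ]
    congr 1
    omega
  rw [hpow]
  have hk := pm_key hN l y
  linear_combination (-(1 - y) ^ (N - 1)) * hk

lemma pm_eq (N l : ℕ) (ξ : ℝ) :
    pseudoMaskII N l ξ = pmG N l (Real.sin (ξ / 2) ^ 2) := by
  unfold pseudoMaskII pmG
  rw [show (1 : ℝ) - Real.sin (ξ / 2) ^ 2 = Real.cos (ξ / 2) ^ 2 from
    (Real.cos_sq' _).symm]
  simp [pow_mul]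

lemma pmG_anti {N : ℕ} (hN : 0 < N) (l : ℕ) :
    AntitoneOn (pmG N l) (Set.Icc 0 1) := by
  apply antitoneOn_of_deriv_nonpos (convex_Icc 0 1)
  · exact (Differentiable.continuous fun y =>
      (pmG_hasDerivAt hN l y).differentiableAt).continuousOn
  · exact fun y _ => (pmG_hasDerivAt hN l y).differentiableAt.differentiableWithinAt
  · intro x hx
    rw [interior_Icc] at hx
    rw [(pmG_hasDerivAt hN l x).deriv]
    have h1 : (0 : ℝ) ≤ (1 - x) ^ (N - 1) * x ^ l :=
      mul_nonneg (pow_nonneg (by linarith [hx.2]) _) (pow_nonneg hx.1.le _)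
    have h2 : (0 : ℝ) ≤ ((N : ℝ) + l) * ((N - 1 + l).choose l : ℝ) := by positivity
    nlinarith

theorem pseudo_spline_mask_properties (N l : ℕ) (hl : 0 < l) (hlN : l < N) :
    (∀ ξ : ℝ, 0 ≤ pseudoMaskII N l ξ) ∧
    AntitoneOn (pseudoMaskII N l) (Set.Icc 0 π) ∧
    pseudoMaskII N l 0 = 1 ∧
    pseudoMaskII N l π = 0 := by
  have hN : 0 < N := hl.trans hlN
  refine ⟨?_, ?_, ?_, ?_⟩
  · intro ξ
    unfold pseudoMaskII
    apply mul_nonneg ((even_two_mul N).pow_nonneg _)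
    apply Finset.sum_nonneg
    intro j _
    exact mul_nonneg (Nat.cast_nonneg _) ((even_two_mul j).pow_nonneg _)
  · intro a ha b hb hab
    rw [pm_eq, pm_eq]
    have hsina : 0 ≤ Real.sin (a / 2) := Real.sin_nonneg_of_nonneg_of_le_pi
      (by linarith [ha.1]) (by linarith [ha.2, Real.pi_pos])
    have hsinb : 0 ≤ Real.sin (b / 2) := Real.sin_nonneg_of_nonneg_of_le_pi
      (by linarith [hb.1]) (by linarith [hb.2, Real.pi_pos])
    have hmono : Real.sin (a / 2) ≤ Real.sin (b / 2) := by
      apply Real.strictMonoOn_sin.monotoneOn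
      · constructor <;> [linarith [ha.1, Real.pi_pos]; linarith [ha.2]]
      · constructor <;> [linarith [hb.1, Real.pi_pos]; linarith [hb.2]]
      · linarith
    have hya : Real.sin (a / 2) ^ 2 ∈ Set.Icc (0 : ℝ) 1 :=
      ⟨sq_nonneg _, Real.sin_sq_le_one _⟩
    have hyb : Real.sin (b / 2) ^ 2 ∈ Set.Icc (0 : ℝ) 1 :=
      ⟨sq_nonneg _, Real.sin_sq_le_one _⟩
    exact pmG_anti hN l hya hyb (pow_le_pow_left₀ hsina hmono 2)
  · unfold pseudoMaskII
    rw [Finset.sum_range_succ']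
    simp
  · unfold pseudoMaskII
    rw [show π / 2 = π / 2 from rfl, Real.cos_pi_div_two]
    rw [zero_pow (by omega : 2 * N ≠ 0), zero_mul]
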